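/- If $\kappa: (\Omega_1,\mu_1) \to \Omega_2$ is a statistic sufficient for the parameter $x \in M$ of a 3-integrable parametrized measure model $(M,\Omega_1,\mu_1,p_1)$, then the Amari-Chentsov 3-tensor is preserved: for all $x$ and tangent vectors $V,W,X$, $\int_{\Omega_1} \partial_V \ln\bar p_1 \, \partial_W \ln\bar p_1 \, \partial_X \ln\bar p_1 \, dp_1(x) = \int_{\Omega_2} \partial_V \ln\kappa_*(\bar p_1)\, \partial_W \ln\kappa_*(\bar p_1)\, \partial_X \ln\kappa_*(\bar p_1)\, d\kappa_*(p_1(x))$. -/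

import Mathlib

open MeasureTheory Filter Topology

private lemma map_withDensity_comp' {Ω₁ Ω₂ : Type*} [MeasurableSpace Ω₁] [MeasurableSpace Ω₂]
    (ν : Measure Ω₁) {κ : Ω₁ → Ω₂} (hκ : Measurable κ) {g : Ω₂ → ENNReal} (hg : Measurable g) :
    Measure.map κ (ν.withDensity (fun ω => g (κ ω))) = (Measure.map κ ν).withDensity g := by
  ext A hA
  rw [Measure.map_apply hκ hA, withDensity_apply _ (hκ hA), withDensity_apply _ hA,
    setLIntegral_map hA hg hκ]

private lemma tendsto_slope_seq' {E : Type*} [NormedAddCommGroup E] [NormedSpace ℝ E]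
    {F : E → ℝ} {x : E} (U : E) (hF : DifferentiableAt ℝ F x) :
    Tendsto (fun n : ℕ => (F (x + ((1:ℝ)/(n+1)) • U) - F x) / ((1:ℝ)/(n+1))) atTop
      (𝓝 (fderiv ℝ F x U)) := by
  have hline : HasDerivAt (fun τ : ℝ => x + τ • U) U 0 := by
    simpa using ((hasDerivAt_id (0:ℝ)).smul_const U).const_add x
  have hx0 : x + (0:ℝ) • U = x := by simp
  have hF' : HasFDerivAt F (fderiv ℝ F x) (x + (0:ℝ) • U) := by
    rw [hx0]; exact hF.hasFDerivAt
  have hd : HasDerivAt (fun τ : ℝ => F (x + τ • U)) (fderiv ℝ F x U) 0 :=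
    hF'.comp_hasDerivAt (0:ℝ) hline
  have hu : Tendsto (fun n : ℕ => (1:ℝ)/(n+1)) atTop (𝓝[≠] (0:ℝ)) := by
    refine tendsto_nhdsWithin_of_tendsto_nhds_of_eventually_within _
      tendsto_one_div_add_atTop_nhds_zero_nat (Eventually.of_forall fun n => ?_)
    simp only [Set.mem_compl_iff, Set.mem_singleton_iff]
    positivity
  have h2 := (hasDerivAt_iff_tendsto_slope.mp hd).comp hu
  refine h2.congr fun n => ?_
  simp [Function.comp, slope_def_field, hx0]

private lemma fderiv_apply_eq_of_diff' {E : Type*} [NormedAddCommGroup E] [NormedSpace ℝ E]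
    {f g : E → ℝ} {x : E} {U : E}
    (hf : DifferentiableAt ℝ f x) (hg : DifferentiableAt ℝ g x)
    (h : ∀ n : ℕ, f (x + ((1:ℝ)/(n+1)) • U) - f x = g (x + ((1:ℝ)/(n+1)) • U) - g x) :
    fderiv ℝ f x U = fderiv ℝ g x U := by
  refine tendsto_nhds_unique ((tendsto_slope_seq' U hf).congr fun n => ?_) (tendsto_slope_seq' U hg)
  rw [h n]

set_option maxHeartbeats 2000000 in
/-- Invariance of the Amari–Chentsov 3-tensor under a sufficient statistic: if `κ` is
sufficient for the parameter of a 3-integrable parametrized measure model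
`(M, Ω₁, μ₁, p₁)`, then for all `x` and tangent vectors `V, W, X`,
`∫_{Ω₁} ∂_V ln p̄₁ ∂_W ln p̄₁ ∂_X ln p̄₁ dp₁(x)
  = ∫_{Ω₂} ∂_V ln κ_*(p̄₁) ∂_W ln κ_*(p̄₁) ∂_X ln κ_*(p̄₁) dκ_*(p₁(x))`. -/
theorem stmt_8 {E Ω₁ Ω₂ : Type*} [NormedAddCommGroup E] [NormedSpace ℝ E]
    [MeasurableSpace Ω₁] [MeasurableSpace Ω₂]
    (μ₁ : Measure Ω₁) [IsFiniteMeasure μ₁]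
    (κ : Ω₁ → Ω₂) (hκ : Measurable κ)
    (p₁ : E → Ω₁ → ℝ) (hp₁pos : ∀ x ω, 0 < p₁ x ω)
    (hp₁meas : ∀ x, Measurable (p₁ x)) (hp₁int : ∀ x, Integrable (p₁ x) μ₁)
    -- `q x` is the density of the transformed model: `κ_*(p̄₁)(x,·) = d(κ_*p₁(x))/d(κ_*μ₁)`
    (q : E → Ω₂ → ℝ) (hqpos : ∀ x ω₂, 0 < q x ω₂) (hqmeas : ∀ x, Measurable (q x))
    (hq : ∀ x, Measure.map κ (μ₁.withDensity (fun ω => ENNReal.ofReal (p₁ x ω)))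
        = (Measure.map κ μ₁).withDensity (fun ω₂ => ENNReal.ofReal (q x ω₂)))
    -- differentiability of the log-likelihoods in the parameter
    (hdiff : ∀ ω x, DifferentiableAt ℝ (fun y => Real.log (p₁ y ω)) x)
    (hdiff' : ∀ ω₂ x, DifferentiableAt ℝ (fun y => Real.log (q y ω₂)) x)
    -- 3-integrability of the scores
    (hL3 : ∀ x (V : E), MemLp (fun ω => fderiv ℝ (fun y => Real.log (p₁ y ω)) x V) 3
        (μ₁.withDensity (fun ω => ENNReal.ofReal (p₁ x ω))))
    (hL3' : ∀ x (V : E), MemLp (fun ω₂ => fderiv ℝ (fun y => Real.log (q y ω₂)) x V) 3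
        ((Measure.map κ μ₁).withDensity (fun ω₂ => ENNReal.ofReal (q x ω₂))))
    -- sufficiency of `κ`: Fisher–Neyman factorization of the densities
    (hsuff : ∃ (s : E → Ω₂ → ℝ) (t : Ω₁ → ℝ),
        (∀ x, Integrable (s x) (Measure.map κ μ₁)) ∧ Integrable t μ₁ ∧
        ∀ x, ∀ᵐ ω ∂μ₁, p₁ x ω = s x (κ ω) * t ω) :
    ∀ x (V W X : E),
      ∫ ω, (fderiv ℝ (fun y => Real.log (p₁ y ω)) x V)
          * (fderiv ℝ (fun y => Real.log (p₁ y ω)) x W)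
          * (fderiv ℝ (fun y => Real.log (p₁ y ω)) x X)
          ∂(μ₁.withDensity (fun ω => ENNReal.ofReal (p₁ x ω)))
        = ∫ ω₂, (fderiv ℝ (fun y => Real.log (q y ω₂)) x V)
          * (fderiv ℝ (fun y => Real.log (q y ω₂)) x W)
          * (fderiv ℝ (fun y => Real.log (q y ω₂)) x X)
          ∂((Measure.map κ μ₁).withDensity (fun ω₂ => ENNReal.ofReal (q x ω₂))) := by
  obtain ⟨s, t, hsint, htint, hfac⟩ := hsuff
  intro x V W X
  -- measurable versions of `s` and `t`
  set s' : E → Ω₂ → ℝ := fun y => (hsint y).1.mk (s y) with hs'def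
  set t' : Ω₁ → ℝ := htint.1.mk t with ht'def
  have hs'meas : ∀ y, Measurable (s' y) := fun y => (hsint y).1.stronglyMeasurable_mk.measurable
  have ht'meas : Measurable t' := htint.1.stronglyMeasurable_mk.measurable
  have ht'int : Integrable t' μ₁ := htint.congr htint.1.ae_eq_mk
  have hfac' : ∀ y : E, ∀ᵐ ω ∂μ₁, p₁ y ω = s' y (κ ω) * t' ω := by
    intro y
    have h2 : ∀ᵐ ω ∂μ₁, s y (κ ω) = s' y (κ ω) :=
      ae_of_ae_map hκ.aemeasurable ((hsint y).1.ae_eq_mk)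
    filter_upwards [hfac y, h2, htint.1.ae_eq_mk] with ω e1 e2 e3
    rw [e1, e2, e3]
  -- the auxiliary measure ν = |t'| dμ₁
  set ν : Measure Ω₁ := μ₁.withDensity (fun ω => ENNReal.ofReal |t' ω|) with hνdef
  haveI hνfin : IsFiniteMeasure ν :=
    isFiniteMeasure_withDensity ((hasFiniteIntegral_iff_ofReal
      (Eventually.of_forall fun ω => abs_nonneg _)).mp ht'int.abs.2).ne
  -- the Radon–Nikodym density of κ_*ν with respect to κ_*μ₁
  set ρ : Ω₂ → ENNReal := Measure.rnDeriv (Measure.map κ ν) (Measure.map κ μ₁) with hρdef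
  set r : Ω₂ → ℝ := fun ω₂ => (ρ ω₂).toReal with hrdef
  have step3 : (Measure.map κ μ₁).withDensity ρ = Measure.map κ ν :=
    Measure.withDensity_rnDeriv_eq _ _ ((withDensity_absolutelyContinuous μ₁ _).map hκ)
  have step1 : ∀ y : E, μ₁.withDensity (fun ω => ENNReal.ofReal (p₁ y ω))
      = ν.withDensity (fun ω => ENNReal.ofReal |s' y (κ ω)|) := by
    intro y
    rw [hνdef, ← withDensity_mul (f := fun ω => ENNReal.ofReal |t' ω|)
      (g := fun ω => ENNReal.ofReal |s' y (κ ω)|) μ₁ (ht'meas.abs.ennreal_ofReal)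
      (((hs'meas y).comp hκ).abs.ennreal_ofReal)]
    refine withDensity_congr_ae ?_
    filter_upwards [hfac' y] with ω e1
    have hpos : (0:ℝ) < s' y (κ ω) * t' ω := e1 ▸ hp₁pos y ω
    simp only [Pi.mul_apply]
    rw [e1, ← abs_of_pos hpos, abs_mul, ENNReal.ofReal_mul (abs_nonneg _), mul_comm]
  have hfinP : ∀ y : E, IsFiniteMeasure (μ₁.withDensity (fun ω => ENNReal.ofReal (p₁ y ω))) := by
    intro y
    exact isFiniteMeasure_withDensity ((hasFiniteIntegral_iff_ofReal
      (Eventually.of_forall fun ω => (hp₁pos y ω).le)).mp (hp₁int y).2).ne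
  have hkey : ∀ y : E, ∀ᵐ ω₂ ∂(Measure.map κ μ₁),
      ENNReal.ofReal (q y ω₂) = ρ ω₂ * ENNReal.ofReal |s' y ω₂| := by
    intro y
    have e1 : (Measure.map κ μ₁).withDensity (fun ω₂ => ENNReal.ofReal (q y ω₂))
        = (Measure.map κ μ₁).withDensity
            ((fun ω₂ => ρ ω₂) * (fun ω₂ => ENNReal.ofReal |s' y ω₂|)) := by
      rw [← hq y, step1 y,
        map_withDensity_comp' (g := fun ω₂ => ENNReal.ofReal |s' y ω₂|) ν hκ ((hs'meas y).abs.ennreal_ofReal),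
        ← step3, ← withDensity_mul _ (Measure.measurable_rnDeriv _ _)
          ((hs'meas y).abs.ennreal_ofReal)]
    have hne : ∫⁻ ω₂, ENNReal.ofReal (q y ω₂) ∂(Measure.map κ μ₁) ≠ ⊤ := by
      haveI := hfinP y
      haveI : IsFiniteMeasure ((Measure.map κ μ₁).withDensity
          (fun ω₂ => ENNReal.ofReal (q y ω₂))) := by
        rw [← hq y]; infer_instance
      have h1 := measure_lt_top ((Measure.map κ μ₁).withDensity
        (fun ω₂ => ENNReal.ofReal (q y ω₂))) Set.univ
      rwa [withDensity_apply _ MeasurableSet.univ, setLIntegral_univ, lt_top_iff_ne_top] at h1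
    have := (withDensity_eq_iff
      ((hqmeas y).ennreal_ofReal).aemeasurable
      ((Measure.measurable_rnDeriv _ _).mul
        ((hs'meas y).abs.ennreal_ofReal)).aemeasurable hne).mp e1
    filter_upwards [this] with ω₂ h
    simpa using h
  have hkeyR : ∀ y : E, ∀ᵐ ω₂ ∂(Measure.map κ μ₁), q y ω₂ = r ω₂ * |s' y ω₂| := by
    intro y
    filter_upwards [hkey y] with ω₂ h1
    have := congrArg ENNReal.toReal h1
    rwa [ENNReal.toReal_ofReal (hqpos y ω₂).le, ENNReal.toReal_mul,
      ENNReal.toReal_ofReal (abs_nonneg _)] at this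
  -- score invariance
  have hscore : ∀ U : E, ∀ᵐ ω ∂μ₁,
      fderiv ℝ (fun y => Real.log (p₁ y ω)) x U
        = fderiv ℝ (fun y => Real.log (q y (κ ω))) x U := by
    intro U
    have hA : ∀ᵐ ω ∂μ₁, ∀ n : ℕ,
        p₁ (x + ((1:ℝ)/(n+1)) • U) ω = s' (x + ((1:ℝ)/(n+1)) • U) (κ ω) * t' ω :=
      ae_all_iff.mpr fun n => hfac' _
    have hB : ∀ᵐ ω ∂μ₁, ∀ n : ℕ,
        q (x + ((1:ℝ)/(n+1)) • U) (κ ω) = r (κ ω) * |s' (x + ((1:ℝ)/(n+1)) • U) (κ ω)| :=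
      ae_all_iff.mpr fun n => ae_of_ae_map hκ.aemeasurable (hkeyR _)
    filter_upwards [hA, hB, hfac' x, ae_of_ae_map hκ.aemeasurable (hkeyR x)]
      with ω hA hB hx0 hx1
    refine fderiv_apply_eq_of_diff' (hdiff ω x) (hdiff' (κ ω) x) fun n => ?_
    have hx0' : s' x (κ ω) * t' ω ≠ 0 := by rw [← hx0]; exact (hp₁pos x ω).ne'
    have hsx := (mul_ne_zero_iff.mp hx0').1
    have ht0 := (mul_ne_zero_iff.mp hx0').2
    have hn0' : s' (x + ((1:ℝ)/(n+1)) • U) (κ ω) * t' ω ≠ 0 := by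
      rw [← hA n]; exact (hp₁pos _ ω).ne'
    have hsn := (mul_ne_zero_iff.mp hn0').1
    have hq0' : r (κ ω) * |s' x (κ ω)| ≠ 0 := by rw [← hx1]; exact (hqpos x (κ ω)).ne'
    have hr0 := (mul_ne_zero_iff.mp hq0').1
    rw [hA n, hx0, hB n, hx1, Real.log_mul hsn ht0, Real.log_mul hsx ht0,
      Real.log_mul hr0 (abs_ne_zero.mpr hsn), Real.log_mul hr0 (abs_ne_zero.mpr hsx),
      Real.log_abs, Real.log_abs]
    ring
  -- measurability of the transformed scores
  have hGmeas : ∀ U : E, Measurable (fun ω₂ => fderiv ℝ (fun y => Real.log (q y ω₂)) x U) := by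
    intro U
    refine measurable_of_tendsto_metrizable
      (f := fun (n : ℕ) (ω₂ : Ω₂) =>
        (Real.log (q (x + ((1:ℝ)/(n+1)) • U) ω₂) - Real.log (q x ω₂)) / ((1:ℝ)/(n+1)))
      (fun n => ((hqmeas _).log.sub (hqmeas x).log).div_const _) ?_
    rw [tendsto_pi_nhds]
    intro ω₂
    exact tendsto_slope_seq' U (hdiff' ω₂ x)
  -- final assembly
  have hac : μ₁.withDensity (fun ω => ENNReal.ofReal (p₁ x ω)) ≪ μ₁ :=
    withDensity_absolutelyContinuous _ _
  have hsm : AEStronglyMeasurable (fun ω₂ =>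
      (fderiv ℝ (fun y => Real.log (q y ω₂)) x V)
        * (fderiv ℝ (fun y => Real.log (q y ω₂)) x W)
        * (fderiv ℝ (fun y => Real.log (q y ω₂)) x X))
      (Measure.map κ (μ₁.withDensity (fun ω => ENNReal.ofReal (p₁ x ω)))) :=
    (((hGmeas V).mul (hGmeas W)).mul (hGmeas X)).aestronglyMeasurable
  calc ∫ ω, (fderiv ℝ (fun y => Real.log (p₁ y ω)) x V)
          * (fderiv ℝ (fun y => Real.log (p₁ y ω)) x W)
          * (fderiv ℝ (fun y => Real.log (p₁ y ω)) x X)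
          ∂(μ₁.withDensity (fun ω => ENNReal.ofReal (p₁ x ω)))
      = ∫ ω, (fun ω₂ => (fderiv ℝ (fun y => Real.log (q y ω₂)) x V)
          * (fderiv ℝ (fun y => Real.log (q y ω₂)) x W)
          * (fderiv ℝ (fun y => Real.log (q y ω₂)) x X)) (κ ω)
          ∂(μ₁.withDensity (fun ω => ENNReal.ofReal (p₁ x ω))) := by
        refine integral_congr_ae ?_
        filter_upwards [(hscore V).filter_mono hac.ae_le, (hscore W).filter_mono hac.ae_le,
          (hscore X).filter_mono hac.ae_le] with ω h1 h2 h3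
        rw [h1, h2, h3]
    _ = ∫ ω₂, (fderiv ℝ (fun y => Real.log (q y ω₂)) x V)
          * (fderiv ℝ (fun y => Real.log (q y ω₂)) x W)
          * (fderiv ℝ (fun y => Real.log (q y ω₂)) x X)
          ∂(Measure.map κ (μ₁.withDensity (fun ω => ENNReal.ofReal (p₁ x ω)))) :=
        (integral_map hκ.aemeasurable hsm).symm
    _ = ∫ ω₂, (fderiv ℝ (fun y => Real.log (q y ω₂)) x V)
          * (fderiv ℝ (fun y => Real.log (q y ω₂)) x W)
          * (fderiv ℝ (fun y => Real.log (q y ω₂)) x X)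
          ∂((Measure.map κ μ₁).withDensity (fun ω₂ => ENNReal.ofReal (q x ω₂))) := by
        rw [hq x]
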